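/- Let z_1, …, z_T be i.i.d. Bernoulli(p) random variables. In the corrupted-feedback OCP setting where the number of feedback errors satisfies G_{0→1} + G_{1→0} = Σ_{t=1}^T z_t, the deterministic bound of Theorem 1 together with Hoeffding's inequality implies: with probability at least 1 - δ, the empirical miscoverage of OCP satisfies MisCov(T) ≤ (B+η)/(ηT) + 2(p + sqrt(log(1/δ)/(2T))). -/

import Mathlib

open MeasureTheory ProbabilityTheory

lemma aux_nonneg_of_hasDerivAt {f f' : ℝ → ℝ} (hd : ∀ x, HasDerivAt f (f' x) x)
    (h0 : f 0 = 0) (hf' : ∀ x, 0 ≤ x → 0 ≤ f' x) {t : ℝ} (ht : 0 ≤ t) : 0 ≤ f t := by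
  have hdiff : Differentiable ℝ f := fun x => (hd x).differentiableAt
  have hmono := monotoneOn_of_deriv_nonneg (convex_Icc 0 t) hdiff.continuous.continuousOn
    hdiff.differentiableOn (fun x hx => by
      rw [interior_Icc] at hx
      rw [(hd x).deriv]; exact hf' x hx.1.le)
  have := hmono (Set.left_mem_Icc.2 ht) (Set.right_mem_Icc.2 ht) ht
  simpa [h0] using this

lemma aux_bernoulli_mgf_le (p : ℝ) (hp0 : 0 ≤ p) (hp1 : p ≤ 1) {t : ℝ} (ht : 0 ≤ t) :
    1 - p + p * Real.exp t ≤ Real.exp (p * t + t ^ 2 / 8) := by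
  have hu : ∀ x : ℝ, 0 < 1 - p + p * Real.exp x := by
    intro x
    rcases eq_or_lt_of_le hp0 with h | h
    · simp [← h]
    · nlinarith [Real.exp_pos x]
  have hud : ∀ x : ℝ, HasDerivAt (fun x => 1 - p + p * Real.exp x) (p * Real.exp x) x := by
    intro x
    exact ((Real.hasDerivAt_exp x).const_mul p).const_add (1 - p)
  -- derivative of vv
  have hvv : ∀ x : ℝ, HasDerivAt (fun x => p * Real.exp x / (1 - p + p * Real.exp x))
      (p * Real.exp x / (1 - p + p * Real.exp x)
        - (p * Real.exp x / (1 - p + p * Real.exp x)) ^ 2) x := by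
    intro x
    have hne := (hu x).ne'
    have h := ((Real.hasDerivAt_exp x).const_mul p).div (hud x) hne
    refine h.congr_deriv ?_
    field_simp
  -- φ := p + x/4 - vv x
  have hφ : ∀ x : ℝ, HasDerivAt (fun x => p + x / 4 - p * Real.exp x / (1 - p + p * Real.exp x))
      (1 / 4 - (p * Real.exp x / (1 - p + p * Real.exp x)
        - (p * Real.exp x / (1 - p + p * Real.exp x)) ^ 2)) x := by
    intro x
    have h1 : HasDerivAt (fun x : ℝ => p + x / 4) (1 / 4) x := by
      simpa using ((hasDerivAt_id x).div_const 4).const_add p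
    exact h1.sub (hvv x)
  have hφnn : ∀ x : ℝ, 0 ≤ x → 0 ≤ p + x / 4 - p * Real.exp x / (1 - p + p * Real.exp x) := by
    intro x hx
    refine aux_nonneg_of_hasDerivAt hφ ?_ (fun y _ => ?_) hx
    · simp
    · nlinarith [sq_nonneg (p * Real.exp y / (1 - p + p * Real.exp y) - 1 / 2)]
  -- h := p x + x²/8 - log u
  have hh : ∀ x : ℝ, HasDerivAt
      (fun x => p * x + x ^ 2 / 8 - Real.log (1 - p + p * Real.exp x))
      (p + x / 4 - p * Real.exp x / (1 - p + p * Real.exp x)) x := by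
    intro x
    have h1 : HasDerivAt (fun x : ℝ => p * x + x ^ 2 / 8) (p + x / 4) x := by
      have := ((hasDerivAt_id x).const_mul p).add ((hasDerivAt_pow 2 x).div_const 8)
      refine this.congr_deriv ?_
      norm_num
      ring
    exact h1.sub ((hud x).log (hu x).ne')
  have key : 0 ≤ p * t + t ^ 2 / 8 - Real.log (1 - p + p * Real.exp t) := by
    refine aux_nonneg_of_hasDerivAt hh ?_ (fun y hy => hφnn y hy) ht
    simp
  calc 1 - p + p * Real.exp t = Real.exp (Real.log (1 - p + p * Real.exp t)) :=
        (Real.exp_log (hu t)).symm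
    _ ≤ Real.exp (p * t + t ^ 2 / 8) := Real.exp_le_exp.mpr (by linarith)

set_option maxHeartbeats 2000000 in
/-- Corollary 1: OCP under i.i.d. Bernoulli(p) feedback corruption:
with probability at least 1 - δ,
MisCov(T) ≤ (B+η)/(ηT) + 2(p + sqrt(log(1/δ)/(2T))). -/
theorem ocp_iid_corruption_miscoverage
    {Ω : Type*} [MeasurableSpace Ω] (μ : Measure Ω) [IsProbabilityMeasure μ]
    (B η α p δ : ℝ) (T : ℕ) (s : ℕ → ℝ) (z r e ebar : ℕ → Ω → ℝ)
    (hB : 0 < B) (hη : 0 < η) (hα : α ∈ Set.Icc (0 : ℝ) 1)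
    (hp : 0 ≤ p ∧ p < 1 / 2) (hδ : 0 < δ ∧ δ < 1) (hT : 1 ≤ T)
    (hs : ∀ t, s t ∈ Set.Icc (0 : ℝ) B)
    (hmeas : ∀ t, Measurable (z t))
    (hz01 : ∀ t ω, z t ω = 0 ∨ z t ω = 1)
    (hber : ∀ t, μ {ω | z t ω = 1} = ENNReal.ofReal p)
    (hindep : iIndepFun z μ)
    (he : ∀ t ω, e t ω = if r t ω < s t then (1 : ℝ) else 0)
    (hebar : ∀ t ω, ebar t ω = |e t ω - z t ω|)
    (hr1 : ∀ ω, r 1 ω = 0)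
    (hrec : ∀ t, 1 ≤ t → ∀ ω, r (t + 1) ω = r t ω - η * (α - ebar t ω)) :
    ENNReal.ofReal (1 - δ) ≤
      μ {ω | |α - (1 / (T : ℝ)) * ∑ t ∈ Finset.Icc 1 T, e t ω|
        ≤ (B + η) / (η * T)
          + 2 * (p + Real.sqrt (Real.log (1 / δ) / (2 * T)))} := by
  obtain ⟨hp0, hp2⟩ := hp
  obtain ⟨hδ0, hδ1⟩ := hδ
  obtain ⟨hα0, hα1⟩ := hα
  have hp1 : p ≤ 1 := by linarith
  have hT0 : (0 : ℝ) < T := by exact_mod_cast Nat.lt_of_lt_of_le Nat.zero_lt_one hT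
  set L : ℝ := Real.log (1 / δ) with hL
  have hL0 : 0 ≤ L := Real.log_nonneg (by rw [le_div_iff₀ hδ0]; linarith)
  set u : ℝ := Real.sqrt ((T : ℝ) * L / 2) with hu
  have hu0 : 0 ≤ u := Real.sqrt_nonneg _
  have hu2 : u ^ 2 = (T : ℝ) * L / 2 := Real.sq_sqrt (by positivity)
  clear_value L u
  set S : Ω → ℝ := fun ω => ∑ t ∈ Finset.Icc 1 T, z t ω with hS
  -- basic facts about e, ebar, z
  have hznn : ∀ t ω, 0 ≤ z t ω := by
    intro t ω; rcases hz01 t ω with h | h <;> rw [h] <;> norm_num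
  have hzle : ∀ t ω, z t ω ≤ 1 := by
    intro t ω; rcases hz01 t ω with h | h <;> rw [h] <;> norm_num
  have he01 : ∀ t ω, e t ω = 0 ∨ e t ω = 1 := by
    intro t ω; rw [he]; split <;> simp
  have hbar_le : ∀ t ω, ebar t ω ≤ 1 := by
    intro t ω
    rcases he01 t ω with h1 | h1 <;> rcases hz01 t ω with h2 | h2 <;>
      simp [hebar, h1, h2] <;> norm_num
  have hbar_nn : ∀ t ω, 0 ≤ ebar t ω := by
    intro t ω; rw [hebar]; exact abs_nonneg _
  have habs : ∀ t ω, |ebar t ω - e t ω| = z t ω := by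
    intro t ω
    rcases he01 t ω with h1 | h1 <;> rcases hz01 t ω with h2 | h2 <;>
      simp [hebar, h1, h2] <;> norm_num
  have hZnn : ∀ ω n, (0:ℝ) ≤ ∑ t ∈ Finset.Icc 1 n, z t ω :=
    fun ω n => Finset.sum_nonneg fun t _ => hznn t ω
  -- telescoping
  have tele : ∀ ω n, r (n + 1) ω
      = η * (∑ t ∈ Finset.Icc 1 n, ebar t ω) - η * α * n := by
    intro ω n
    induction n with
    | zero => simp [hr1 ω]
    | succ k ih =>
      rw [hrec (k + 1) (by omega) ω, ih,
        Finset.sum_Icc_succ_top (by omega : 1 ≤ k + 1)]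
      push_cast; ring
  -- bounds on r
  have rbound : ∀ ω n,
      -η - η * ∑ t ∈ Finset.Icc 1 n, z t ω ≤ r (n + 1) ω ∧
      r (n + 1) ω ≤ B + η + η * ∑ t ∈ Finset.Icc 1 n, z t ω := by
    intro ω n
    induction n with
    | zero =>
      simp only [Finset.Icc_self, Finset.Icc_eq_empty_of_lt (by norm_num : (1:ℕ) > 0)]
      constructor <;> simp [hr1 ω] <;> nlinarith
    | succ k ih =>
      obtain ⟨ihl, ihr⟩ := ih
      have hrw := hrec (k + 1) (by omega) ω
      rw [Finset.sum_Icc_succ_top (by omega : 1 ≤ k + 1)]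
      have hznn' := hznn (k + 1) ω
      have hzle' := hzle (k + 1) ω
      constructor
      · -- lower bound
        by_cases hr0 : r (k + 1) ω < 0
        · have he1 : e (k + 1) ω = 1 := by
            rw [he, if_pos (lt_of_lt_of_le hr0 (hs (k + 1)).1)]
          have hb : ebar (k + 1) ω = 1 - z (k + 1) ω := by
              rw [hebar, he1, abs_of_nonneg (by linarith)]
          rw [hrw, hb]
          nlinarith [mul_nonneg hη.le (sub_nonneg.2 hα1), mul_nonneg hη.le hznn']
        · push_neg at hr0
          have hbn := hbar_nn (k + 1) ω
          rw [hrw]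
          nlinarith [mul_nonneg hη.le hbn, mul_nonneg hη.le hznn',
            mul_nonneg hη.le (hZnn ω k), mul_nonneg hη.le hα0,
            mul_le_mul_of_nonneg_left hα1 hη.le]
      · -- upper bound
        by_cases hrB : B ≤ r (k + 1) ω
        · have he0 : e (k + 1) ω = 0 := by
            rw [he, if_neg (not_lt.mpr (le_trans (hs (k + 1)).2 hrB))]
          have hb : ebar (k + 1) ω = z (k + 1) ω := by
            rw [hebar, he0, abs_of_nonpos (by linarith), neg_sub, sub_zero]
          rw [hrw, hb]
          nlinarith [mul_nonneg hη.le hα0]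
        · push_neg at hrB
          have hble := hbar_le (k + 1) ω
          have hZk := hZnn ω k
          rw [hrw]
          nlinarith [mul_nonneg hη.le hα0, mul_nonneg hη.le hZk,
            mul_nonneg hη.le hznn', mul_le_mul_of_nonneg_left hble hη.le]
  -- deterministic implication
  have husplit : u = (T : ℝ) * Real.sqrt (L / (2 * T)) := by
    rw [hu, show (T : ℝ) * L / 2 = (T : ℝ) ^ 2 * (L / (2 * T)) by
      field_simp, Real.sqrt_mul (sq_nonneg _), Real.sqrt_sq hT0.le]
  have hincl : {ω | S ω ≤ p * T + u} ⊆
      {ω | |α - (1 / (T : ℝ)) * ∑ t ∈ Finset.Icc 1 T, e t ω|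
        ≤ (B + η) / (η * T) + 2 * (p + Real.sqrt (L / (2 * T)))} := by
    intro ω hω
    simp only [Set.mem_setOf_eq] at hω ⊢
    have hZb0 : ∑ t ∈ Finset.Icc 1 T, z t ω ≤ p * T + u := hω
    obtain ⟨hl, hr'⟩ := rbound ω T
    have htel := tele ω T
    set Z := ∑ t ∈ Finset.Icc 1 T, z t ω with hZ
    set E := ∑ t ∈ Finset.Icc 1 T, e t ω with hE
    set Eb := ∑ t ∈ Finset.Icc 1 T, ebar t ω with hEb
    clear_value Z E Eb
    have hdiff : |Eb - E| ≤ Z := by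
      rw [hEb, hE, hZ, ← Finset.sum_sub_distrib]
      calc |∑ t ∈ Finset.Icc 1 T, (ebar t ω - e t ω)|
          ≤ ∑ t ∈ Finset.Icc 1 T, |ebar t ω - e t ω| := Finset.abs_sum_le_sum_abs _ _
        _ = ∑ t ∈ Finset.Icc 1 T, z t ω := Finset.sum_congr rfl fun t _ => habs t ω
    have hEb_bound : |Eb - α * T| ≤ (B + η) / η + Z := by
      have hBη : η * ((B + η) / η + Z) = B + η + η * Z := by field_simp
      rw [htel] at hl hr'
      rw [abs_le]
      constructor
      · have h2 : η * (-((B + η) / η + Z)) ≤ η * (Eb - α * T) := by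
          rw [mul_neg, hBη, show η * (Eb - α * (T:ℝ)) = η * Eb - η * α * T by ring]
          linarith
        exact le_of_mul_le_mul_left h2 hη
      · have h2 : η * (Eb - α * T) ≤ η * ((B + η) / η + Z) := by
          rw [hBη, show η * (Eb - α * (T:ℝ)) = η * Eb - η * α * T by ring]
          linarith
        exact le_of_mul_le_mul_left h2 hη
    have hfinal : |α * T - E| ≤ (B + η) / η + 2 * Z := by
      have := abs_sub_le (α * T) Eb E
      rw [abs_sub_comm (α * T) Eb] at this
      linarith [this, hEb_bound, hdiff]
    have hZb : Z ≤ p * T + u := hZb0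
    have h1T : |α - (1 / (T : ℝ)) * E| = |α * T - E| / T := by
      rw [show α - (1 / (T : ℝ)) * E = (α * T - E) / T by field_simp,
        abs_div, abs_of_pos hT0]
    have hRHS : (B + η) / (η * (T : ℝ)) + 2 * (p + Real.sqrt (L / (2 * T)))
        = ((B + η) / η + 2 * (p * T + u)) / T := by
      rw [husplit]; field_simp
    rw [h1T, hRHS]
    have hnum : |α * (T : ℝ) - E| ≤ (B + η) / η + 2 * (p * T + u) := by linarith
    exact by gcongr
  -- Step B: Chernoff bound for the corruption count
  classical
  have hAz : ∀ t, MeasurableSet {ω | z t ω = 1} := fun t =>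
    (hmeas t) (measurableSet_singleton 1)
  have hzind : ∀ t, z t = Set.indicator {ω | z t ω = 1} (fun _ => (1 : ℝ)) := by
    intro t; funext ω
    rcases hz01 t ω with h | h <;> simp [Set.indicator_apply, h]
  have hzint : ∀ t, Integrable (z t) μ := fun t => by
    rw [hzind t]; exact (integrable_const (1 : ℝ)).indicator (hAz t)
  have hEz : ∀ t, ∫ ω, z t ω ∂μ = p := by
    intro t
    rw [hzind t, show (fun _ : Ω => (1 : ℝ)) = (1 : Ω → ℝ) from rfl,
      integral_indicator_one (hAz t), measureReal_def, hber t, ENNReal.toReal_ofReal hp0]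
  set lam : ℝ := 4 * u / T with hlam
  have hlam0 : 0 ≤ lam := by rw [hlam]; positivity
  have hexpz : ∀ t ω, Real.exp (lam * z t ω) = 1 + (Real.exp lam - 1) * z t ω := by
    intro t ω
    rcases hz01 t ω with h | h <;> rw [h]
    · simp
    · rw [mul_one, mul_one]; ring
  have hmgfz : ∀ t, mgf (z t) μ lam = 1 - p + p * Real.exp lam := by
    intro t
    have h0 : mgf (z t) μ lam = ∫ ω, Real.exp (lam * z t ω) ∂μ := rfl
    rw [h0]
    calc ∫ ω, Real.exp (lam * z t ω) ∂μ
        = ∫ ω, (1 + (Real.exp lam - 1) * z t ω) ∂μ :=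
          integral_congr_ae (Filter.Eventually.of_forall fun ω => hexpz t ω)
      _ = 1 + (Real.exp lam - 1) * p := by
          rw [integral_add (integrable_const 1) ((hzint t).const_mul _),
            integral_const, integral_const_mul, hEz t]
          simp
      _ = 1 - p + p * Real.exp lam := by ring
  have hSmeas : Measurable S := by
    rw [hS]; exact Finset.measurable_sum _ fun t _ => hmeas t
  have hSsum : S = ∑ t ∈ Finset.Icc 1 T, z t := by
    funext ω; rw [hS]; simp [Finset.sum_apply]
  have hSle : ∀ ω, S ω ≤ T := by
    intro ω
    rw [hS]
    calc ∑ t ∈ Finset.Icc 1 T, z t ω ≤ ∑ t ∈ Finset.Icc 1 T, (1 : ℝ) :=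
          Finset.sum_le_sum fun t _ => hzle t ω
      _ = T := by simp [Nat.card_Icc]
  have h_intS : Integrable (fun ω => Real.exp (lam * S ω)) μ := by
    refine Integrable.mono' (integrable_const (Real.exp (lam * T)))
      ((hSmeas.const_mul lam).exp.aestronglyMeasurable) ?_
    filter_upwards with ω
    rw [Real.norm_eq_abs, abs_of_pos (Real.exp_pos _)]
    exact Real.exp_le_exp.mpr (mul_le_mul_of_nonneg_left (hSle ω) hlam0)
  have chern := measure_ge_le_exp_mul_mgf (μ := μ) (X := S) (t := lam) (p * T + u) hlam0 h_intS
  have hmgfS : mgf S μ lam ≤ Real.exp ((T : ℝ) * (p * lam + lam ^ 2 / 8)) := by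
    rw [hSsum, hindep.mgf_sum hmeas]
    calc ∏ t ∈ Finset.Icc 1 T, mgf (z t) μ lam
        ≤ ∏ t ∈ Finset.Icc 1 T, Real.exp (p * lam + lam ^ 2 / 8) := by
          refine Finset.prod_le_prod (fun t _ => ?_) (fun t _ => ?_)
          · rw [hmgfz t]; nlinarith [Real.exp_pos lam]
          · rw [hmgfz t]; exact aux_bernoulli_mgf_le p hp0 hp1 hlam0
      _ = Real.exp (p * lam + lam ^ 2 / 8) ^ T := by
          rw [Finset.prod_const]; congr 1; simp [Nat.card_Icc]
      _ = Real.exp ((T : ℝ) * (p * lam + lam ^ 2 / 8)) := by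
          rw [← Real.exp_nat_mul]
  have hdeq : Real.exp (-lam * (p * T + u)) * Real.exp ((T : ℝ) * (p * lam + lam ^ 2 / 8)) = δ := by
    rw [← Real.exp_add]
    have h1 : -lam * (p * ↑T + u) + (T : ℝ) * (p * lam + lam ^ 2 / 8) = -(2 * u ^ 2 / T) := by
      rw [hlam]; field_simp; ring
    have h2 : -(2 * ((T : ℝ) * L / 2) / T) = -L := by field_simp
    rw [h1, hu2, h2, hL, one_div, Real.log_inv, neg_neg, Real.exp_log hδ0]
  have htail : (μ {ω | p * ↑T + u ≤ S ω}).toReal ≤ δ := by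
    calc (μ {ω | p * ↑T + u ≤ S ω}).toReal
        ≤ Real.exp (-lam * (p * T + u)) * mgf S μ lam := chern
      _ ≤ Real.exp (-lam * (p * T + u)) * Real.exp ((T : ℝ) * (p * lam + lam ^ 2 / 8)) :=
          mul_le_mul_of_nonneg_left hmgfS (Real.exp_pos _).le
      _ = δ := hdeq
  have htailE : μ {ω | p * ↑T + u ≤ S ω} ≤ ENNReal.ofReal δ := by
    rw [← ENNReal.ofReal_toReal (measure_ne_top μ _)]
    exact ENNReal.ofReal_le_ofReal htail
  -- assemble
  set G : Set Ω := {ω | S ω ≤ p * ↑T + u} with hG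
  have hGmeas : MeasurableSet G := measurableSet_le hSmeas measurable_const
  have hGc : μ Gᶜ ≤ ENNReal.ofReal δ := by
    refine le_trans (measure_mono ?_) htailE
    intro ω hω
    simp only [hG, Set.mem_compl_iff, Set.mem_setOf_eq, not_le] at hω
    exact le_of_lt hω
  have hμG : μ G = 1 - μ Gᶜ := by
    have h := prob_compl_eq_one_sub (μ := μ) hGmeas.compl
    rw [compl_compl] at h
    exact h
  calc ENNReal.ofReal (1 - δ)
      = 1 - ENNReal.ofReal δ := by
        rw [ENNReal.ofReal_sub _ hδ0.le, ENNReal.ofReal_one]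
    _ ≤ 1 - μ Gᶜ := tsub_le_tsub_left hGc 1
    _ = μ G := hμG.symm
    _ ≤ _ := measure_mono hincl
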